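/- In the Dyck path algebra A_q, the elements y_i ∈ e_k A_q e_k satisfy y_i T_j = T_j y_i whenever i ∉ {j, j+1}, and y_i d_− = d_− y_i, and d_+ y_i = T_1 T_2 ⋯ T_i · y_i · (T_1 T_2 ⋯ T_i)^{-1} · d_+. -/

import Mathlib

/-!
STATEMENT 14: In the Dyck path algebra 𝔸_q, the elements y_i ∈ e_k 𝔸_q e_k
(y₁ := (q^{k−1}(q−1))⁻¹ (d₊d₋ − d₋d₊) T_{k−1}⋯T₁, y_{i+1} := q T_i⁻¹ y_i T_i⁻¹,
with T_i⁻¹ = q⁻¹(T_i + q − 1)) satisfy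
y_i T_j = T_j y_i (i ∉ {j, j+1}), y_i d₋ = d₋ y_i, and
d₊ y_i = T₁⋯T_i · y_i · (T₁⋯T_i)⁻¹ · d₊.

Encoding: an identity holds in the path algebra 𝔸_q iff it holds in every
representation; we quantify over modules V k with operators T, d₊, d₋ satisfying the
defining relations, and Y m i (= y_i at vertex m) satisfying the defining identities.
Operators compose right-to-left.
-/

noncomputable section

abbrev K : Type := RatFunc ℚ

noncomputable def q : K := RatFunc.X

lemma q_ne : (q : K) ≠ 0 := RatFunc.X_ne_zero

lemma q1_ne : (q : K) - 1 ≠ 0 := by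
  rw [sub_ne_zero]
  intro h
  have h2 : (algebraMap (Polynomial ℚ) K) Polynomial.X = algebraMap (Polynomial ℚ) K 1 := by
    simp only [RatFunc.algebraMap_X, map_one]; exact h
  have h3 := IsFractionRing.injective (Polynomial ℚ) K h2
  have h4 := Polynomial.natDegree_X (R := ℚ)
  rw [h3] at h4
  simp at h4

lemma cscalar (m : ℕ) : ((q:K)^(m+1) * (q-1))⁻¹ * q = ((q:K)^m * (q-1))⁻¹ := by
  have h1 := q_ne
  have h2 := q1_ne
  have h3 : (q:K)^m ≠ 0 := pow_ne_zero _ h1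
  rw [pow_succ]
  field_simp

private lemma foldr_comp_right {M : Type} [AddCommGroup M] [Module K M]
    (A : ℕ → M →ₗ[K] M) (c : M →ₗ[K] M) (l : List ℕ) :
    l.foldr (fun i f => f ∘ₗ A i) c = c ∘ₗ l.foldr (fun i f => f ∘ₗ A i) LinearMap.id := by
  induction l with
  | nil => simp
  | cons a l ih =>
    simp only [List.foldr_cons, ih]
    rw [LinearMap.comp_assoc]

private lemma foldr_comp_left {M : Type} [AddCommGroup M] [Module K M]
    (A : ℕ → M →ₗ[K] M) (c : M →ₗ[K] M) (l : List ℕ) :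
    l.foldr (fun i f => A i ∘ₗ f) c = l.foldr (fun i f => A i ∘ₗ f) LinearMap.id ∘ₗ c := by
  induction l with
  | nil => simp
  | cons a l ih =>
    simp only [List.foldr_cons, ih]
    rw [LinearMap.comp_assoc]

structure Ctx (V : ℕ → Type) [∀ k, AddCommGroup (V k)] [∀ k, Module K (V k)] where
  T : ∀ k : ℕ, ℕ → (V k →ₗ[K] V k)
  dp : ∀ k : ℕ, V k →ₗ[K] V (k + 1)
  dm : ∀ k : ℕ, V (k + 1) →ₗ[K] V k
  Y : ∀ m : ℕ, ℕ → (V m →ₗ[K] V m)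
  hquad : ∀ k i, 1 ≤ i → i + 1 ≤ k →
    (T k i) ∘ₗ (T k i) = (1 - q) • T k i + q • LinearMap.id
  hbraid : ∀ k i, 1 ≤ i → i + 2 ≤ k →
    (T k i) ∘ₗ (T k (i + 1)) ∘ₗ (T k i) = (T k (i + 1)) ∘ₗ (T k i) ∘ₗ (T k (i + 1))
  hcomm : ∀ k i j, 1 ≤ i → i + 1 ≤ k → 1 ≤ j → j + 1 ≤ k → i + 1 < j →
    (T k i) ∘ₗ (T k j) = (T k j) ∘ₗ (T k i)
  hTdm : ∀ k i, 1 ≤ i → i + 1 ≤ k → (T k i) ∘ₗ (dm k) = (dm k) ∘ₗ (T (k + 1) i)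
  hdpT : ∀ k i, 1 ≤ i → i + 1 ≤ k → (dp k) ∘ₗ (T k i) = (T (k + 1) (i + 1)) ∘ₗ (dp k)
  hrel8 : ∀ k, (dm (k + 1)) ∘ₗ
      ((dp (k + 1)) ∘ₗ (dm (k + 1)) - (dm (k + 2)) ∘ₗ (dp (k + 2))) ∘ₗ
        (T (k + 2) (k + 1)) =
    q • (((dp k) ∘ₗ (dm k) - (dm (k + 1)) ∘ₗ (dp (k + 1))) ∘ₗ (dm (k + 1)))
  hrel9 : ∀ k, (T (k + 2) 1) ∘ₗ
      ((dp (k + 1)) ∘ₗ (dm (k + 1)) - (dm (k + 2)) ∘ₗ (dp (k + 2))) ∘ₗ (dp (k + 1)) =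
    q • ((dp (k + 1)) ∘ₗ ((dp k) ∘ₗ (dm k) - (dm (k + 1)) ∘ₗ (dp (k + 1))))
  hY1 : ∀ m : ℕ, Y (m + 1) 1 = (q ^ m * (q - 1))⁻¹ •
    (((dp m) ∘ₗ (dm m) - (dm (m + 1)) ∘ₗ (dp (m + 1))) ∘ₗ
      ((List.range m).foldr (fun i f => f ∘ₗ (T (m + 1) (i + 1))) LinearMap.id))
  hYrec : ∀ m i, 1 ≤ i → i ≤ m →
    Y (m + 1) (i + 1) = q •
      ((q⁻¹ • T (m + 1) i + (1 - q⁻¹) • LinearMap.id) ∘ₗ (Y (m + 1) i) ∘ₗ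
        (q⁻¹ • T (m + 1) i + (1 - q⁻¹) • LinearMap.id))

namespace Ctx

variable {V : ℕ → Type} [∀ k, AddCommGroup (V k)] [∀ k, Module K (V k)] (C : Ctx V)

def S (k i : ℕ) : V k →ₗ[K] V k := q⁻¹ • C.T k i + (1 - q⁻¹) • LinearMap.id

def Phi (k : ℕ) : V (k + 1) →ₗ[K] V (k + 1) :=
  (C.dp k) ∘ₗ (C.dm k) - (C.dm (k + 1)) ∘ₗ (C.dp (k + 1))

def P (k n : ℕ) : V k →ₗ[K] V k :=
  (List.range n).foldr (fun i f => f ∘ₗ C.T k (i + 1)) LinearMap.id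

def Lw (k n : ℕ) : V k →ₗ[K] V k :=
  (List.range n).foldr (fun a f => C.T k (a + 1) ∘ₗ f) LinearMap.id

def Rw (k n : ℕ) : V k →ₗ[K] V k :=
  (List.range n).foldr (fun a f => f ∘ₗ C.S k (a + 1)) LinearMap.id

lemma TT (k i : ℕ) (h1 : 1 ≤ i) (h2 : i + 1 ≤ k) (v : V k) :
    C.T k i (C.T k i v) = (1 - q) • C.T k i v + q • v := by
  have h := LinearMap.congr_fun (C.hquad k i h1 h2) v
  simpa using h

lemma TS (k i : ℕ) (h1 : 1 ≤ i) (h2 : i + 1 ≤ k) (v : V k) :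
    C.T k i (C.S k i v) = v := by
  simp only [S, LinearMap.add_apply, LinearMap.smul_apply, LinearMap.id_apply, map_add, map_smul,
    C.TT k i h1 h2, smul_add, smul_smul]
  rw [add_right_comm, ← add_smul,
    show q⁻¹ * (1 - q) + (1 - q⁻¹) = 0 by rw [mul_one_sub, inv_mul_cancel₀ q_ne]; ring,
    zero_smul, zero_add, inv_mul_cancel₀ q_ne, one_smul]

lemma ST (k i : ℕ) (h1 : 1 ≤ i) (h2 : i + 1 ≤ k) (v : V k) :
    C.S k i (C.T k i v) = v := by
  simp only [S, LinearMap.add_apply, LinearMap.smul_apply, LinearMap.id_apply,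
    C.TT k i h1 h2, smul_add, smul_smul]
  rw [add_right_comm, ← add_smul,
    show q⁻¹ * (1 - q) + (1 - q⁻¹) = 0 by rw [mul_one_sub, inv_mul_cancel₀ q_ne]; ring,
    zero_smul, zero_add, inv_mul_cancel₀ q_ne, one_smul]

lemma Tinj (k i : ℕ) (h1 : 1 ≤ i) (h2 : i + 1 ≤ k) {x y : V k}
    (h : C.T k i x = C.T k i y) : x = y := by
  rw [← C.ST k i h1 h2 x, h, C.ST k i h1 h2 y]

lemma braid' (k i : ℕ) (h1 : 1 ≤ i) (h2 : i + 2 ≤ k) (v : V k) :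
    C.T k i (C.T k (i + 1) (C.T k i v)) = C.T k (i + 1) (C.T k i (C.T k (i + 1) v)) := by
  have h := LinearMap.congr_fun (C.hbraid k i h1 h2) v
  simpa using h

lemma comm' (k i j : ℕ) (h1 : 1 ≤ i) (h2 : i + 1 ≤ k) (h3 : 1 ≤ j) (h4 : j + 1 ≤ k)
    (h5 : i + 1 < j) (v : V k) : C.T k i (C.T k j v) = C.T k j (C.T k i v) := by
  have h := LinearMap.congr_fun (C.hcomm k i j h1 h2 h3 h4 h5) v
  simpa using h

lemma Tdm' (k i : ℕ) (h1 : 1 ≤ i) (h2 : i + 1 ≤ k) (v : V (k + 1)) :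
    C.T k i (C.dm k v) = C.dm k (C.T (k + 1) i v) := by
  have h := LinearMap.congr_fun (C.hTdm k i h1 h2) v
  simpa using h

lemma dpT' (k i : ℕ) (h1 : 1 ≤ i) (h2 : i + 1 ≤ k) (v : V k) :
    C.dp k (C.T k i v) = C.T (k + 1) (i + 1) (C.dp k v) := by
  have h := LinearMap.congr_fun (C.hdpT k i h1 h2) v
  simpa using h

lemma Snat {a b : ℕ} (i j : ℕ) (f : V a →ₗ[K] V b)
    (h : ∀ v, C.T b j (f v) = f (C.T a i v)) (v : V a) :
    C.S b j (f v) = f (C.S a i v) := by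
  simp only [S, LinearMap.add_apply, LinearMap.smul_apply, LinearMap.id_apply, h,
    ← map_smul, ← map_add]

end Ctx

namespace Ctx

variable {V : ℕ → Type} [∀ k, AddCommGroup (V k)] [∀ k, Module K (V k)] (C : Ctx V)

lemma D1 (k i : ℕ) (h1 : 1 ≤ i) (h2 : i + 2 ≤ k) (v : V k) :
    C.S k (i + 1) (C.T k i v) =
      C.T k i (C.T k (i + 1) (C.S k i (C.S k (i + 1) v))) := by
  apply C.Tinj k (i + 1) (by omega) (by omega)
  rw [C.TS k (i + 1) (by omega) (by omega), ← C.braid' k i h1 h2,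
    C.TS k i h1 (by omega), C.TS k (i + 1) (by omega) (by omega)]

lemma D2 (k i : ℕ) (h1 : 1 ≤ i) (h2 : i + 2 ≤ k) (v : V k) :
    C.S k i (C.S k (i + 1) v) =
      C.T k (i + 1) (C.S k i (C.S k (i + 1) (C.S k i v))) := by
  have h := C.D1 k i h1 h2 (C.S k i v)
  rw [C.TS k i h1 (by omega)] at h
  calc C.S k i (C.S k (i + 1) v)
      = C.S k i (C.T k i (C.T k (i + 1) (C.S k i (C.S k (i + 1) (C.S k i v))))) := by rw [← h]
    _ = C.T k (i + 1) (C.S k i (C.S k (i + 1) (C.S k i v))) := by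
        rw [C.ST k i h1 (by omega)]

lemma B1 (k i : ℕ) (h1 : 1 ≤ i) (h2 : i + 2 ≤ k) (v : V k) :
    C.T k i (C.S k (i + 1) (C.S k i v)) =
      C.S k (i + 1) (C.S k i (C.T k (i + 1) v)) := by
  apply C.Tinj k (i + 1) (by omega) (by omega)
  apply C.Tinj k i h1 (by omega)
  rw [C.braid' k i h1 h2, C.TS k (i + 1) (by omega) (by omega), C.TS k i h1 (by omega),
    C.TS k (i + 1) (by omega) (by omega), C.TS k i h1 (by omega)]

lemma B2 (k i : ℕ) (h1 : 1 ≤ i) (h2 : i + 2 ≤ k) (v : V k) :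
    C.T k (i + 1) (C.S k i (C.S k (i + 1) v)) =
      C.S k i (C.S k (i + 1) (C.T k i v)) := by
  apply C.Tinj k i h1 (by omega)
  apply C.Tinj k (i + 1) (by omega) (by omega)
  rw [← C.braid' k i h1 h2, C.TS k i h1 (by omega), C.TS k (i + 1) (by omega) (by omega),
    C.TS k i h1 (by omega), C.TS k (i + 1) (by omega) (by omega)]

lemma P_zero (k : ℕ) (v : V k) : C.P k 0 v = v := rfl

lemma P_succ (k n : ℕ) (v : V k) : C.P k (n + 1) v = C.T k (n + 1) (C.P k n v) := by
  have : C.P k (n + 1) = C.T k (n + 1) ∘ₗ C.P k n := by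
    rw [P, List.range_succ, List.foldr_append, foldr_comp_right]
    simp only [List.foldr_cons, List.foldr_nil, LinearMap.id_comp]
    rfl
  rw [this]; rfl

lemma Lw_zero (k : ℕ) (v : V k) : C.Lw k 0 v = v := rfl

lemma Lw_succ (k n : ℕ) (v : V k) : C.Lw k (n + 1) v = C.Lw k n (C.T k (n + 1) v) := by
  have : C.Lw k (n + 1) = C.Lw k n ∘ₗ C.T k (n + 1) := by
    rw [Lw, List.range_succ, List.foldr_append, foldr_comp_left]
    simp only [List.foldr_cons, List.foldr_nil, LinearMap.comp_id]
    rfl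
  rw [this]; rfl

lemma Rw_zero (k : ℕ) (v : V k) : C.Rw k 0 v = v := rfl

lemma Rw_succ (k n : ℕ) (v : V k) : C.Rw k (n + 1) v = C.S k (n + 1) (C.Rw k n v) := by
  have : C.Rw k (n + 1) = C.S k (n + 1) ∘ₗ C.Rw k n := by
    rw [Rw, List.range_succ, List.foldr_append, foldr_comp_right]
    simp only [List.foldr_cons, List.foldr_nil, LinearMap.id_comp]
    rfl
  rw [this]; rfl

end Ctx

namespace Ctx

variable {V : ℕ → Type} [∀ k, AddCommGroup (V k)] [∀ k, Module K (V k)] (C : Ctx V)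

lemma Tcomm_P (k j : ℕ) (hj1 : 1 ≤ j) (hj2 : j + 1 ≤ k) :
    ∀ n, n + 1 < j → ∀ v, C.T k j (C.P k n v) = C.P k n (C.T k j v) := by
  intro n
  induction n with
  | zero => intro _ v; rw [C.P_zero, C.P_zero]
  | succ n ih =>
    intro hn v
    rw [C.P_succ, ← C.comm' k (n + 1) j (by omega) (by omega) hj1 hj2 (by omega),
      ih (by omega), C.P_succ]

lemma Tmove_P (k j : ℕ) (hj1 : 1 ≤ j) :
    ∀ n, j + 1 ≤ n → n + 1 ≤ k → ∀ v,
      C.T k j (C.P k n v) = C.P k n (C.T k (j + 1) v) := by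
  intro n
  induction n with
  | zero => intro h _ _; omega
  | succ n ih =>
    intro hn hk v
    rcases Nat.lt_or_ge (j + 1) (n + 1) with hlt | hge
    · -- j + 1 < n + 1 : the top factor commutes
      rw [C.P_succ, C.comm' k j (n + 1) hj1 (by omega) (by omega) hk (by omega),
        ih (by omega) (by omega), ← C.P_succ]
    · -- j + 1 = n + 1, i.e. n = j
      obtain rfl : j = n := by omega
      obtain ⟨j', rfl⟩ : ∃ j', j = j' + 1 := ⟨j - 1, by omega⟩
      rw [C.P_succ, C.P_succ]
      -- T_{j'+1} (T_{j'+2} (T_{j'+1} (P j' v))) = T_{j'+2}(T_{j'+1}(T_{j'+2}(P j' v)))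
      rw [C.braid' k (j' + 1) (by omega) (by omega),
        C.Tcomm_P k (j' + 2) (by omega) (by omega) j' (by omega),
        ← C.P_succ, ← C.P_succ]

lemma Tcomm_Lw (k j : ℕ) (hj1 : 1 ≤ j) (hj2 : j + 1 ≤ k) :
    ∀ n, n + 1 < j → ∀ v, C.T k j (C.Lw k n v) = C.Lw k n (C.T k j v) := by
  intro n
  induction n with
  | zero => intro _ v; rw [C.Lw_zero, C.Lw_zero]
  | succ n ih =>
    intro hn v
    rw [C.Lw_succ, ih (by omega), ← C.comm' k (n + 1) j (by omega) (by omega) hj1 hj2 (by omega),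
      C.Lw_succ]

lemma Tcomm_Rw (k j : ℕ) (hj1 : 1 ≤ j) (hj2 : j + 1 ≤ k) :
    ∀ n, n + 1 < j → ∀ v, C.T k j (C.Rw k n v) = C.Rw k n (C.T k j v) := by
  intro n
  induction n with
  | zero => intro _ v; rw [C.Rw_zero, C.Rw_zero]
  | succ n ih =>
    intro hn v
    have hS : ∀ w, C.T k j (C.S k (n + 1) w) = C.S k (n + 1) (C.T k j w) := by
      intro w
      exact (C.Snat (n + 1) (n + 1) (C.T k j)
        (fun u => C.comm' k (n + 1) j (by omega) (by omega) hj1 hj2 (by omega) u) w).symm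
    rw [C.Rw_succ, hS, ih (by omega), C.Rw_succ]

lemma K1 (k i : ℕ) (h1 : 1 ≤ i) (h2 : i + 2 ≤ k) (v : V k) :
    C.S k (i + 1) (C.Lw k i v) =
      C.Lw k i (C.T k (i + 1) (C.S k i (C.S k (i + 1) v))) := by
  obtain ⟨i', rfl⟩ : ∃ i', i = i' + 1 := ⟨i - 1, by omega⟩
  rw [C.Lw_succ]
  have hSL : ∀ w, C.S k (i' + 2) (C.Lw k i' w) = C.Lw k i' (C.S k (i' + 2) w) := by
    intro w
    exact C.Snat (i' + 2) (i' + 2) (C.Lw k i')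
      (fun u => C.Tcomm_Lw k (i' + 2) (by omega) (by omega) i' (by omega) u) w
  rw [hSL, C.D1 k (i' + 1) (by omega) (by omega), ← C.Lw_succ]

lemma K2 (k i : ℕ) (h1 : 1 ≤ i) (h2 : i + 2 ≤ k) (v : V k) :
    C.Rw k i (C.S k (i + 1) v) =
      C.T k (i + 1) (C.S k i (C.S k (i + 1) (C.Rw k i v))) := by
  obtain ⟨i', rfl⟩ : ∃ i', i = i' + 1 := ⟨i - 1, by omega⟩
  rw [C.Rw_succ]
  have hSR : ∀ w, C.Rw k i' (C.S k (i' + 2) w) = C.S k (i' + 2) (C.Rw k i' w) := by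
    intro w
    exact (C.Snat (i' + 2) (i' + 2) (C.Rw k i')
      (fun u => C.Tcomm_Rw k (i' + 2) (by omega) (by omega) i' (by omega) u) w).symm
  rw [hSR, C.D2 k (i' + 1) (by omega) (by omega), ← C.Rw_succ]

lemma TPhi (k j : ℕ) (h1 : 1 ≤ j) (h2 : j + 1 ≤ k) (v : V (k + 1)) :
    C.T (k + 1) (j + 1) (C.Phi k v) = C.Phi k (C.T (k + 1) j v) := by
  simp only [Phi, LinearMap.sub_apply, LinearMap.comp_apply, map_sub]
  rw [← C.dpT' k j h1 h2, C.Tdm' k j h1 h2,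
    C.Tdm' (k + 1) (j + 1) (by omega) (by omega), ← C.dpT' (k + 1) j h1 (by omega)]

lemma rel8' (k : ℕ) (v : V (k + 2)) :
    C.dm (k + 1) (C.Phi (k + 1) (C.T (k + 2) (k + 1) v)) =
      q • C.Phi k (C.dm (k + 1) v) := by
  have h := LinearMap.congr_fun (C.hrel8 k) v
  simpa only [Phi, LinearMap.sub_apply, LinearMap.comp_apply, LinearMap.smul_apply,
    map_sub, smul_sub] using h

lemma rel9' (k : ℕ) (v : V (k + 1)) :
    C.T (k + 2) 1 (C.Phi (k + 1) (C.dp (k + 1) v)) =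
      q • C.dp (k + 1) (C.Phi k v) := by
  have h := LinearMap.congr_fun (C.hrel9 k) v
  simpa only [Phi, LinearMap.sub_apply, LinearMap.comp_apply, LinearMap.smul_apply,
    map_sub, smul_sub] using h

lemma P_dm (k : ℕ) : ∀ n, n + 1 ≤ k → ∀ v : V (k + 1),
    C.P k n (C.dm k v) = C.dm k (C.P (k + 1) n v) := by
  intro n
  induction n with
  | zero => intro _ v; rw [C.P_zero, C.P_zero]
  | succ n ih =>
    intro hn v
    rw [C.P_succ, ih (by omega), C.Tdm' k (n + 1) (by omega) (by omega), ← C.P_succ]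

lemma P_S1_dp (k : ℕ) : ∀ n, n + 1 ≤ k → ∀ v : V k,
    C.P (k + 1) (n + 1) (C.S (k + 1) 1 (C.dp k v)) = C.dp k (C.P k n v) := by
  intro n
  induction n with
  | zero =>
    intro hk v
    rw [C.P_succ, C.P_zero, C.TS (k + 1) 1 le_rfl (by omega), C.P_zero]
  | succ n ih =>
    intro hn v
    rw [C.P_succ, ih (by omega), ← C.dpT' k (n + 1) (by omega) (by omega), ← C.P_succ]

lemma Y1' (m : ℕ) (v : V (m + 1)) :
    C.Y (m + 1) 1 v = ((q : K) ^ m * (q - 1))⁻¹ • C.Phi m (C.P (m + 1) m v) := by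
  rw [C.hY1 m]; rfl

lemma Yrec' (m i : ℕ) (h1 : 1 ≤ i) (h2 : i ≤ m) (v : V (m + 1)) :
    C.Y (m + 1) (i + 1) v = q • C.S (m + 1) i (C.Y (m + 1) i (C.S (m + 1) i v)) := by
  rw [C.hYrec m i h1 h2]; rfl

end Ctx

namespace Ctx

variable {V : ℕ → Type} [∀ k, AddCommGroup (V k)] [∀ k, Module K (V k)] (C : Ctx V)

lemma partA : ∀ i m j, 1 ≤ i → i ≤ m + 1 → 1 ≤ j → j + 1 ≤ m + 1 → i ≠ j → i ≠ j + 1 →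
    ∀ v, C.Y (m + 1) i (C.T (m + 1) j v) = C.T (m + 1) j (C.Y (m + 1) i v) := by
  intro i
  induction i using Nat.strong_induction_on with
  | _ i IH =>
  intro m j hi1 hi2 hj1 hj2 hne1 hne2 v
  match i, hi1, hi2, hne1, hne2, IH with
  | 1, _, _, hne1, hne2, IH =>
    obtain ⟨j', rfl⟩ : ∃ j', j = j' + 1 := ⟨j - 1, by omega⟩
    have hj'1 : 1 ≤ j' := by omega
    rw [C.Y1', C.Y1', map_smul]
    congr 1
    rw [C.TPhi m j' hj'1 (by omega), C.Tmove_P (m + 1) j' hj'1 m (by omega) (by omega)]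
  | (i2 + 2), _, hi2, hne1, hne2, IH =>
    have hrec := C.Yrec' m (i2 + 1) (by omega) (by omega)
    rw [hrec, hrec, map_smul]
    congr 1
    by_cases hj : j = i2
    · -- braid case
      subst hj
      have hrec2 := C.Yrec' m j hj1 (by omega)
      rw [hrec2, hrec2]
      simp only [map_smul]
      congr 1
      rw [← C.B2 (m + 1) j hj1 (by omega),
        IH j (by omega) m (j + 1) hj1 (by omega) (by omega) (by omega) (by omega) (by omega),
        ← C.B1 (m + 1) j hj1 (by omega)]
    · -- commuting case : |j - (i2+1)| ≥ 2
      have hTS' : ∀ w, C.S (m + 1) (i2 + 1) (C.T (m + 1) j w) =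
          C.T (m + 1) j (C.S (m + 1) (i2 + 1) w) := by
        intro w
        rcases Nat.lt_or_ge (j + 1) (i2 + 1) with hlt | hge
        · exact C.Snat (i2 + 1) (i2 + 1) (C.T (m + 1) j)
            (fun u => (C.comm' (m + 1) j (i2 + 1) hj1 (by omega) (by omega) (by omega)
              (by omega) u).symm) w
        · have hgt : i2 + 1 + 1 < j := by omega
          exact C.Snat (i2 + 1) (i2 + 1) (C.T (m + 1) j)
            (fun u => C.comm' (m + 1) (i2 + 1) j (by omega) (by omega) hj1 hj2 hgt u) w
      rw [hTS', IH (i2 + 1) (by omega) m j (by omega) (by omega) hj1 hj2 (by omega) (by omega),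
        hTS']

lemma partA_S (i m j : ℕ) (h1 : 1 ≤ i) (h2 : i ≤ m + 1) (h3 : 1 ≤ j) (h4 : j + 1 ≤ m + 1)
    (h5 : i ≠ j) (h6 : i ≠ j + 1) (v : V (m + 1)) :
    C.Y (m + 1) i (C.S (m + 1) j v) = C.S (m + 1) j (C.Y (m + 1) i v) := by
  exact (C.Snat j j (C.Y (m + 1) i)
    (fun u => (C.partA i m j h1 h2 h3 h4 h5 h6 u).symm) v).symm

lemma partB : ∀ i m, 1 ≤ i → i ≤ m + 1 → ∀ v,
    C.Y (m + 1) i (C.dm (m + 1) v) = C.dm (m + 1) (C.Y (m + 2) i v) := by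
  intro i
  induction i with
  | zero => intro m h1 h2 v; exact absurd h1 (by omega)
  | succ i ih =>
    intro m h1 h2 v
    rcases Nat.eq_zero_or_pos i with rfl | hi
    · -- base case i + 1 = 1
      rw [C.Y1' m, C.Y1' (m + 1), map_smul, C.P_succ, C.rel8' m,
        ← C.P_dm (m + 1) m (by omega), smul_smul, cscalar m]
    · rw [C.Yrec' m i hi (by omega), C.Yrec' (m + 1) i hi (by omega), map_smul]
      congr 1
      have hSdm : ∀ w, C.S (m + 1) i (C.dm (m + 1) w) = C.dm (m + 1) (C.S (m + 2) i w) :=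
        fun w => C.Snat i i (C.dm (m + 1)) (fun u => C.Tdm' (m + 1) i hi (by omega) u) w
      rw [hSdm, ih m hi (by omega), hSdm]

lemma partC : ∀ i m, 1 ≤ i → i ≤ m + 1 → ∀ v,
    C.dp (m + 1) (C.Y (m + 1) i v) =
      C.Lw (m + 2) i (C.Y (m + 2) i (C.Rw (m + 2) i (C.dp (m + 1) v))) := by
  intro i
  induction i with
  | zero => intro m h1 h2 v; exact absurd h1 (by omega)
  | succ i ih =>
    intro m h1 h2 v
    rcases Nat.eq_zero_or_pos i with rfl | hi
    · -- base case
      rw [C.Lw_succ, C.Lw_zero, C.Rw_succ, C.Rw_zero,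
        C.Y1' m, C.Y1' (m + 1), map_smul, map_smul,
        C.P_S1_dp (m + 1) m (by omega), C.rel9' m, smul_smul, cscalar m]
    · -- inductive step
      have hSdp : ∀ w, C.S (m + 2) (i + 1) (C.dp (m + 1) w) =
          C.dp (m + 1) (C.S (m + 1) i w) :=
        fun w => C.Snat i (i + 1) (C.dp (m + 1))
          (fun u => (C.dpT' (m + 1) i hi (by omega) u).symm) w
      rw [C.Yrec' m i hi (by omega), map_smul, C.Lw_succ, C.Rw_succ,
        C.Yrec' (m + 1) i hi (by omega)]
      -- LHS: q • dp (S_i (Y_i (S_i v)))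
      rw [← hSdp, ih m hi (by omega), ← hSdp,
        C.K2 (m + 2) i hi (by omega),
        C.partA i (m + 1) (i + 1) hi (by omega) (by omega) (by omega) (by omega) (by omega),
        C.K1 (m + 2) i hi (by omega),
        C.ST (m + 2) (i + 1) (by omega) (by omega)]
      simp only [map_smul]

end Ctx

theorem dyck_path_algebra_y_relations
    (V : ℕ → Type) [∀ k, AddCommGroup (V k)] [∀ k, Module K (V k)]
    (T : ∀ k : ℕ, ℕ → (V k →ₗ[K] V k))
    (dp : ∀ k : ℕ, V k →ₗ[K] V (k + 1))
    (dm : ∀ k : ℕ, V (k + 1) →ₗ[K] V k)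
    (hquad : ∀ k i, 1 ≤ i → i + 1 ≤ k →
      (T k i) ∘ₗ (T k i) = (1 - q) • T k i + q • LinearMap.id)
    (hbraid : ∀ k i, 1 ≤ i → i + 2 ≤ k →
      (T k i) ∘ₗ (T k (i + 1)) ∘ₗ (T k i) = (T k (i + 1)) ∘ₗ (T k i) ∘ₗ (T k (i + 1)))
    (hcomm : ∀ k i j, 1 ≤ i → i + 1 ≤ k → 1 ≤ j → j + 1 ≤ k → i + 1 < j →
      (T k i) ∘ₗ (T k j) = (T k j) ∘ₗ (T k i))
    (hTdm : ∀ k i, 1 ≤ i → i + 1 ≤ k →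
      (T k i) ∘ₗ (dm k) = (dm k) ∘ₗ (T (k + 1) i))
    (hdpT : ∀ k i, 1 ≤ i → i + 1 ≤ k →
      (dp k) ∘ₗ (T k i) = (T (k + 1) (i + 1)) ∘ₗ (dp k))
    (hT1dp : ∀ k, (T (k + 2) 1) ∘ₗ ((dp (k + 1)) ∘ₗ (dp k)) = (dp (k + 1)) ∘ₗ (dp k))
    (hdmT : ∀ k, ((dm k) ∘ₗ (dm (k + 1))) ∘ₗ (T (k + 2) (k + 1)) = (dm k) ∘ₗ (dm (k + 1)))
    (hrel8 : ∀ k, (dm (k + 1)) ∘ₗ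
        ((dp (k + 1)) ∘ₗ (dm (k + 1)) - (dm (k + 2)) ∘ₗ (dp (k + 2))) ∘ₗ
          (T (k + 2) (k + 1)) =
      q • (((dp k) ∘ₗ (dm k) - (dm (k + 1)) ∘ₗ (dp (k + 1))) ∘ₗ (dm (k + 1))))
    (hrel9 : ∀ k, (T (k + 2) 1) ∘ₗ
        ((dp (k + 1)) ∘ₗ (dm (k + 1)) - (dm (k + 2)) ∘ₗ (dp (k + 2))) ∘ₗ (dp (k + 1)) =
      q • ((dp (k + 1)) ∘ₗ ((dp k) ∘ₗ (dm k) - (dm (k + 1)) ∘ₗ (dp (k + 1)))))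
    -- the elements y_i at each vertex m+1 (so that they exist): Y (m+1) i = y_i
    (Y : ∀ m : ℕ, ℕ → (V m →ₗ[K] V m))
    -- y₁ = (q^{k−1}(q−1))⁻¹ (d₊d₋ − d₋d₊) T_{k−1}⋯T₁ at vertex k = m+1
    (hY1 : ∀ m : ℕ, Y (m + 1) 1 = (q ^ m * (q - 1))⁻¹ •
      (((dp m) ∘ₗ (dm m) - (dm (m + 1)) ∘ₗ (dp (m + 1))) ∘ₗ
        ((List.range m).foldr (fun i f => f ∘ₗ (T (m + 1) (i + 1))) LinearMap.id)))
    -- y_{i+1} = q T_i⁻¹ y_i T_i⁻¹, with T_i⁻¹ = q⁻¹ T_i + (1 − q⁻¹)·id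
    (hYrec : ∀ m i, 1 ≤ i → i ≤ m →
      Y (m + 1) (i + 1) = q •
        ((q⁻¹ • T (m + 1) i + (1 - q⁻¹) • LinearMap.id) ∘ₗ (Y (m + 1) i) ∘ₗ
          (q⁻¹ • T (m + 1) i + (1 - q⁻¹) • LinearMap.id))) :
    -- (a) y_i T_j = T_j y_i for i ∉ {j, j+1}
    (∀ m i j, 1 ≤ i → i ≤ m + 1 → 1 ≤ j → j + 1 ≤ m + 1 → i ≠ j → i ≠ j + 1 →
      (Y (m + 1) i) ∘ₗ (T (m + 1) j) = (T (m + 1) j) ∘ₗ (Y (m + 1) i)) ∧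
    -- (b) y_i d₋ = d₋ y_i
    (∀ m i, 1 ≤ i → i ≤ m + 1 →
      (Y (m + 1) i) ∘ₗ (dm (m + 1)) = (dm (m + 1)) ∘ₗ (Y (m + 2) i)) ∧
    -- (c) d₊ y_i = T₁⋯T_i · y_i · (T_i⁻¹⋯T₁⁻¹) · d₊
    (∀ m i, 1 ≤ i → i ≤ m + 1 →
      (dp (m + 1)) ∘ₗ (Y (m + 1) i) =
        ((List.range i).foldr (fun a f => (T (m + 2) (a + 1)) ∘ₗ f) LinearMap.id) ∘ₗ
          (Y (m + 2) i) ∘ₗ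
          ((List.range i).foldr (fun a f =>
              f ∘ₗ (q⁻¹ • T (m + 2) (a + 1) + (1 - q⁻¹) • LinearMap.id))
            LinearMap.id) ∘ₗ
          (dp (m + 1))) := by
  let C : Ctx V := ⟨T, dp, dm, Y, hquad, hbraid, hcomm, hTdm, hdpT, hrel8, hrel9, hY1, hYrec⟩
  refine ⟨?_, ?_, ?_⟩
  · intro m i j h1 h2 h3 h4 h5 h6
    exact LinearMap.ext (C.partA i m j h1 h2 h3 h4 h5 h6)
  · intro m i h1 h2
    exact LinearMap.ext (C.partB i m h1 h2)
  · intro m i h1 h2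
    exact LinearMap.ext (C.partC i m h1 h2)

end
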